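/- For 0 < q < 1, integer r \ge 2, \delta > 0, and 1 \le l \le r-1: D_q^l \cos_r(x, q^r; \delta) = -q^{-\delta(r-l)} \sin_{r,l}(q^\delta x, q^r; \delta) and D_q^r \cos_r(x, q^r; \delta) = -\cos_r(q^\delta x, q^r; \delta), where \sin_{r,l}(x, q^r; \delta) = \sum_{m \ge 0} (-1)^m q^{\delta r \binom{m}{2}} x^{rm + r - l}/[rm + r - l]_q!. -/
import Mathlib


/-- The q-Pochhammer symbol `(a; q)_n`. -/
noncomputable def qPoch (a q : ℝ) (n : ℕ) : ℝ :=
  ∏ j ∈ Finset.range n, (1 - a * q ^ j)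

/-- The q-factorial `[m]_q! = (q;q)_m / (1-q)^m`. -/
noncomputable def qFact (q : ℝ) (n : ℕ) : ℝ := qPoch q q n / (1 - q) ^ n

/-- The q-derivative. -/
noncomputable def Dq (q : ℝ) (f : ℝ → ℝ) : ℝ → ℝ :=
  fun x => (f (q * x) - f x) / ((q - 1) * x)

/-- `cos_r(x, q^r; δ) = ∑_m (-1)^m q^{δ r C(m,2)} x^{rm}/[rm]_q!`. -/
noncomputable def qCos (q : ℝ) (r : ℕ) (δ : ℝ) (x : ℝ) : ℝ :=
  ∑' m : ℕ, (-1 : ℝ) ^ m * q ^ (δ * (r : ℝ) * (m.choose 2 : ℝ)) * x ^ (r * m) /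
    qFact q (r * m)

/-- `sin_{r,l}(x, q^r; δ) = ∑_m (-1)^m q^{δ r C(m,2)} x^{rm+r-l}/[rm+r-l]_q!`. -/
noncomputable def qSin (q : ℝ) (r l : ℕ) (δ : ℝ) (x : ℝ) : ℝ :=
  ∑' m : ℕ, (-1 : ℝ) ^ m * q ^ (δ * (r : ℝ) * (m.choose 2 : ℝ)) *
    x ^ (r * m + r - l) / qFact q (r * m + r - l)

open Filter

lemma qPoch_pos {q : ℝ} (hq0 : 0 < q) (hq1 : q < 1) (n : ℕ) : 0 < qPoch q q n := by
  apply Finset.prod_pos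
  intro j _
  have h1 : q ^ j ≤ 1 := pow_le_one₀ hq0.le hq1.le
  have : q * q ^ j ≤ q * 1 := by
    exact mul_le_mul_of_nonneg_left h1 hq0.le
  nlinarith

lemma qFact_pos {q : ℝ} (hq0 : 0 < q) (hq1 : q < 1) (n : ℕ) : 0 < qFact q n :=
  div_pos (qPoch_pos hq0 hq1 n) (pow_pos (by linarith) n)

lemma qFact_succ {q : ℝ} (n : ℕ) :
    qFact q (n + 1) = qFact q n * ((1 - q ^ (n + 1)) / (1 - q)) := by
  unfold qFact qPoch
  rw [Finset.prod_range_succ, pow_succ (1 - q), ← pow_succ' q]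
  rw [div_mul_div_comm, mul_div_assoc]

lemma qFact_le_succ {q : ℝ} (hq0 : 0 < q) (hq1 : q < 1) (n : ℕ) :
    qFact q n ≤ qFact q (n + 1) := by
  rw [qFact_succ]
  have hf : (1 : ℝ) ≤ (1 - q ^ (n + 1)) / (1 - q) := by
    rw [le_div_iff₀ (by linarith)]
    have : q ^ (n + 1) ≤ q := by
      calc q ^ (n+1) = q * q ^ n := by ring
        _ ≤ q * 1 := mul_le_mul_of_nonneg_left (pow_le_one₀ hq0.le hq1.le) hq0.le
        _ = q := mul_one q
    linarith
  nlinarith [qFact_pos hq0 hq1 n]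

lemma qFact_mono {q : ℝ} (hq0 : 0 < q) (hq1 : q < 1) {n m : ℕ} (h : n ≤ m) :
    qFact q n ≤ qFact q m := by
  induction m with
  | zero => simp_all
  | succ k ih =>
      rcases Nat.lt_or_ge n (k+1) with h' | h'
      · exact le_trans (ih (Nat.lt_succ_iff.mp h')) (qFact_le_succ hq0 hq1 k)
      · have : n = k + 1 := le_antisymm h h'
        simp [this]

lemma qFact_ne_zero {q : ℝ} (hq0 : 0 < q) (hq1 : q < 1) (n : ℕ) : qFact q n ≠ 0 :=
  (qFact_pos hq0 hq1 n).ne'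

lemma qsum_abs_summable {q : ℝ} (hq0 : 0 < q) (hq1 : q < 1) (r : ℕ) (hr : 1 ≤ r)
    (δ : ℝ) (hδ : 0 < δ) (e d : ℕ) (y : ℝ) :
    Summable (fun m : ℕ =>
      q ^ (δ * (r:ℝ) * (((m+e).choose 2 : ℕ) : ℝ)) * |y| ^ (r*m+d) / qFact q (r*m+d)) := by
  set c : ℝ := q ^ (δ * (r:ℝ)) with hc
  have hrpos : (0:ℝ) < δ * (r:ℝ) := by positivity
  have hc0 : 0 < c := Real.rpow_pos_of_pos hq0 _
  have hc1 : c < 1 := Real.rpow_lt_one hq0.le hq1 hrpos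
  have hlim : Tendsto (fun m : ℕ => c ^ (m+e) * |y| ^ r) atTop (nhds (0 * |y| ^ r)) :=
    (((tendsto_pow_atTop_nhds_zero_of_lt_one hc0.le hc1).comp
      (tendsto_add_atTop_nat e)).mul_const _)
  rw [zero_mul] at hlim
  have hev : ∀ᶠ m : ℕ in atTop, c ^ (m+e) * |y| ^ r ≤ 1/2 :=
    hlim.eventually (eventually_le_nhds (by norm_num))
  apply summable_of_ratio_norm_eventually_le (r := 1/2) (by norm_num)
  filter_upwards [hev] with m hm
  set f : ℕ → ℝ := fun m =>
      q ^ (δ * (r:ℝ) * (((m+e).choose 2 : ℕ) : ℝ)) * |y| ^ (r*m+d) / qFact q (r*m+d) with hf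
  have hnn : ∀ k, 0 ≤ f k := by
    intro k
    apply div_nonneg _ (qFact_pos hq0 hq1 _).le
    positivity
  have hkey : f (m+1) ≤ (c ^ (m+e) * |y| ^ r) * f m := by
    have hch : (m+1+e).choose 2 = (m+e).choose 2 + (m+e) := by
      have : m+1+e = (m+e)+1 := by omega
      rw [this, Nat.choose_succ_succ]
      simp [Nat.choose_one_right, Nat.add_comm]
    have hq1' : q ^ (δ * (r:ℝ) * (((m+1+e).choose 2 : ℕ) : ℝ))
        = q ^ (δ * (r:ℝ) * (((m+e).choose 2 : ℕ) : ℝ)) * c ^ (m+e) := by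
      rw [hch, Nat.cast_add, mul_add, Real.rpow_add hq0]
      congr 1
      rw [hc, ← Real.rpow_natCast (q ^ (δ * (r:ℝ))) (m+e), ← Real.rpow_mul hq0.le,
        Nat.cast_add]
    have hpow : |y| ^ (r*(m+1)+d) = |y| ^ (r*m+d) * |y| ^ r := by
      rw [← pow_add]
      congr 1
      ring
    have hfm : qFact q (r*m+d) ≤ qFact q (r*(m+1)+d) :=
      qFact_mono hq0 hq1 (by nlinarith)
    calc f (m+1) = (c ^ (m+e) * |y| ^ r) *
          (q ^ (δ * (r:ℝ) * (((m+e).choose 2 : ℕ) : ℝ)) * |y| ^ (r*m+d)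
            / qFact q (r*(m+1)+d)) := by
            rw [hf]; simp only []; rw [hq1', hpow]; ring
      _ ≤ (c ^ (m+e) * |y| ^ r) *
          (q ^ (δ * (r:ℝ) * (((m+e).choose 2 : ℕ) : ℝ)) * |y| ^ (r*m+d)
            / qFact q (r*m+d)) := by
            exact mul_le_mul_of_nonneg_left
              (div_le_div_of_nonneg_left (by positivity) (qFact_pos hq0 hq1 _) hfm)
              (by positivity)
      _ = (c ^ (m+e) * |y| ^ r) * f m := rfl
  have h2 : (c ^ (m+e) * |y| ^ r) * f m ≤ (1/2) * f m :=
    mul_le_mul_of_nonneg_right hm (hnn m)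
  calc ‖f (m+1)‖ = f (m+1) := Real.norm_of_nonneg (hnn _)
    _ ≤ (1/2) * f m := le_trans hkey h2
    _ = (1/2) * ‖f m‖ := by rw [Real.norm_of_nonneg (hnn m)]

lemma qsum_summable {q : ℝ} (hq0 : 0 < q) (hq1 : q < 1) (r : ℕ) (hr : 1 ≤ r)
    (δ : ℝ) (hδ : 0 < δ) (e d : ℕ) (y : ℝ) :
    Summable (fun m : ℕ =>
      (-1:ℝ)^m * q ^ (δ * (r:ℝ) * (((m+e).choose 2 : ℕ) : ℝ)) * y ^ (r*m+d)
        / qFact q (r*m+d)) := by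
  apply Summable.of_abs
  have := qsum_abs_summable hq0 hq1 r hr δ hδ e d y
  refine this.congr fun m => ?_
  rw [abs_div, abs_mul, abs_mul, abs_pow, abs_neg, abs_one, one_pow, one_mul, abs_pow,
    abs_of_pos (Real.rpow_pos_of_pos hq0 _), abs_of_pos (qFact_pos hq0 hq1 _)]

lemma Dq_tsum {q : ℝ} (hq0 : 0 < q) (hq1 : q < 1) (r : ℕ) (hr : 1 ≤ r)
    (δ : ℝ) (hδ : 0 < δ) (e d : ℕ) (hd : 1 ≤ d) (x : ℝ) (hx : x ≠ 0) :
    Dq q (fun y => ∑' m : ℕ,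
        (-1:ℝ)^m * q ^ (δ * (r:ℝ) * (((m+e).choose 2 : ℕ) : ℝ)) * y ^ (r*m+d)
          / qFact q (r*m+d)) x
    = ∑' m : ℕ, (-1:ℝ)^m * q ^ (δ * (r:ℝ) * (((m+e).choose 2 : ℕ) : ℝ)) * x ^ (r*m+(d-1))
          / qFact q (r*m+(d-1)) := by
  unfold Dq
  rw [← Summable.tsum_sub (qsum_summable hq0 hq1 r hr δ hδ e d (q*x))
    (qsum_summable hq0 hq1 r hr δ hδ e d x), ← tsum_div_const]
  refine tsum_congr fun m => ?_
  set a : ℝ := (-1:ℝ)^m * q ^ (δ * (r:ℝ) * (((m+e).choose 2 : ℕ) : ℝ)) with ha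
  obtain ⟨k, hk, hk2⟩ : ∃ k, r*m+d = k+1 ∧ r*m+(d-1) = k := ⟨r*m+(d-1), by omega, rfl⟩
  rw [hk, hk2, qFact_succ]
  have h1 : (1:ℝ) - q ^ (k+1) ≠ 0 := by
    have : q ^ (k+1) < 1 := pow_lt_one₀ hq0.le hq1 (Nat.succ_ne_zero k)
    linarith
  have h2 : (1:ℝ) - q ≠ 0 := by linarith
  have h3 : q - 1 ≠ 0 := by linarith
  have h4 : qFact q k ≠ 0 := (qFact_pos hq0 hq1 k).ne'
  rw [mul_pow]
  field_simp
  ring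

lemma qFact_zero (q : ℝ) : qFact q 0 = 1 := by simp [qFact, qPoch]

lemma qCos_eq {q : ℝ} (hq0 : 0 < q) (hq1 : q < 1) (r : ℕ) (hr : 1 ≤ r)
    (δ : ℝ) (hδ : 0 < δ) (x : ℝ) :
    qCos q r δ x = 1 - ∑' m : ℕ,
      (-1:ℝ)^m * q ^ (δ * (r:ℝ) * (((m+1).choose 2 : ℕ) : ℝ)) * x ^ (r*m+r)
        / qFact q (r*m+r) := by
  have h : qCos q r δ x = ∑' m : ℕ,
      (-1:ℝ)^m * q ^ (δ * (r:ℝ) * (((m+0).choose 2 : ℕ) : ℝ)) * x ^ (r*m+0)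
        / qFact q (r*m+0) := by
    unfold qCos
    exact tsum_congr fun m => by norm_num
  rw [h, Summable.tsum_eq_zero_add (qsum_summable hq0 hq1 r hr δ hδ 0 0 x)]
  have h0 : (-1:ℝ)^(0:ℕ) * q ^ (δ * (r:ℝ) * ((((0:ℕ)+0).choose 2 : ℕ) : ℝ)) * x ^ (r*0+0)
      / qFact q (r*0+0) = 1 := by
    simp [qFact_zero]
  rw [h0]
  rw [sub_eq_add_neg, ← tsum_neg]
  congr 1
  refine tsum_congr fun m => ?_
  have he : m + 1 + 0 = m + 0 + 1 := by omega
  have he2 : r * (m+1) + 0 = r * m + r := by ring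
  rw [he2, pow_succ, ← he]
  ring

lemma key_iter {q : ℝ} (hq0 : 0 < q) (hq1 : q < 1) (r : ℕ) (hr : 1 ≤ r)
    (δ : ℝ) (hδ : 0 < δ) :
    ∀ l : ℕ, 1 ≤ l → l ≤ r → ∀ x : ℝ, x ≠ 0 →
      (Dq q)^[l] (qCos q r δ) x = -∑' m : ℕ,
        (-1:ℝ)^m * q ^ (δ * (r:ℝ) * (((m+1).choose 2 : ℕ) : ℝ)) * x ^ (r*m+(r-l))
          / qFact q (r*m+(r-l)) := by
  intro l
  induction l with
  | zero => omega
  | succ n ih =>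
    intro _ h2 x hx
    rcases Nat.eq_zero_or_pos n with hn | hn
    · subst hn
      have hstep := Dq_tsum hq0 hq1 r hr δ hδ 1 r hr x hx
      simp only [Dq] at hstep ⊢
      rw [Function.iterate_one] at *
      simp only [Dq, qCos_eq hq0 hq1 r hr δ hδ]
      rw [show r - 1 = r - (0+1) from by omega] at hstep
      rw [← hstep]
      ring
    · rw [Function.iterate_succ_apply']
      have hqx : q * x ≠ 0 := mul_ne_zero hq0.ne' hx
      have hstep := Dq_tsum hq0 hq1 r hr δ hδ 1 (r - n) (by omega) x hx
      simp only [Dq] at hstep ⊢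
      rw [ih hn (by omega) (q*x) hqx, ih hn (by omega) x hx]
      rw [show r - n - 1 = r - (n+1) from by omega] at hstep
      rw [← hstep]
      ring

lemma conv_sin {q : ℝ} (hq0 : 0 < q) (hq1 : q < 1) (r : ℕ) (hr : 1 ≤ r)
    (δ : ℝ) (hδ : 0 < δ) (l : ℕ) (hl : l ≤ r) (x : ℝ) :
    q ^ (-(δ * ((r:ℝ) - (l:ℝ)))) * qSin q r l δ (q ^ δ * x)
      = ∑' m : ℕ, (-1:ℝ)^m * q ^ (δ * (r:ℝ) * (((m+1).choose 2 : ℕ) : ℝ)) * x ^ (r*m+(r-l))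
          / qFact q (r*m+(r-l)) := by
  unfold qSin
  rw [← tsum_mul_left]
  refine tsum_congr fun m => ?_
  have hn : r*m + r - l = r*m + (r-l) := by omega
  have hch : ((m+1).choose 2) = m.choose 2 + m := by
    rw [Nat.choose_succ_succ, Nat.choose_one_right, Nat.add_comm]
  rw [hn, mul_pow, ← Real.rpow_natCast (q ^ δ) (r*m+(r-l)), ← Real.rpow_mul hq0.le]
  rw [show q ^ (-(δ * ((r:ℝ) - (l:ℝ)))) * ((-1:ℝ)^m * q ^ (δ * (r:ℝ) * (m.choose 2:ℝ)) *
      (q ^ (δ * (((r*m+(r-l):ℕ)):ℝ)) * x ^ (r*m+(r-l))) / qFact q (r*m+(r-l)))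
    = (-1:ℝ)^m * (q ^ (-(δ * ((r:ℝ) - (l:ℝ)))) * q ^ (δ * (r:ℝ) * (m.choose 2:ℝ)) *
      q ^ (δ * (((r*m+(r-l):ℕ)):ℝ))) * x ^ (r*m+(r-l)) / qFact q (r*m+(r-l)) from by ring]
  rw [← Real.rpow_add hq0, ← Real.rpow_add hq0]
  congr 2
  rw [hch]
  push_cast [Nat.cast_sub hl]
  ring


/-- The q-derivative formulas
`D_q^l cos_r(x,q^r;δ) = -q^{-δ(r-l)} sin_{r,l}(q^δ x, q^r; δ)` and
`D_q^r cos_r(x,q^r;δ) = -cos_r(q^δ x, q^r; δ)`. -/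
theorem qCos_deriv_formulas (q : ℝ) (hq0 : 0 < q) (hq1 : q < 1)
    (r : ℕ) (hr : 2 ≤ r) (δ : ℝ) (hδ : 0 < δ) (l : ℕ) (hl1 : 1 ≤ l) (hl2 : l ≤ r - 1)
    (x : ℝ) (hx : x ≠ 0) :
    (Dq q)^[l] (qCos q r δ) x =
      -(q ^ (-(δ * ((r : ℝ) - (l : ℝ))))) * qSin q r l δ (q ^ δ * x) ∧
    (Dq q)^[r] (qCos q r δ) x = - qCos q r δ (q ^ δ * x) := by
  have hr1 : 1 ≤ r := by omega
  have hlr : l ≤ r := by omega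
  constructor
  · rw [key_iter hq0 hq1 r hr1 δ hδ l hl1 hlr x hx, neg_mul,
      conv_sin hq0 hq1 r hr1 δ hδ l hlr x]
  · have h2 := conv_sin hq0 hq1 r hr1 δ hδ r le_rfl x
    rw [sub_self, mul_zero, neg_zero, Real.rpow_zero, one_mul] at h2
    have hsc : qSin q r r δ (q ^ δ * x) = qCos q r δ (q ^ δ * x) := by
      unfold qSin qCos
      exact tsum_congr fun m => by rw [show r*m+r-r = r*m from by omega]
    rw [key_iter hq0 hq1 r hr1 δ hδ r hr1 le_rfl x hx, ← h2, hsc]
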